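/- Let m, t ≥ 2 be integers and n = mt. Then the colon ideal L = (J_{n,m}^t : x_1 x_2 ⋯ x_{mt−1}) equals (x_m, x_{2m}, …, x_{mt}). -/

import Mathlib

open MvPolynomial Finset

section Aux

lemma prod_monomial_one' {K σ ι : Type*} [CommSemiring K] (s : Finset ι) (g : ι → (σ →₀ ℕ)) :
    (∏ i ∈ s, (monomial (g i) (1 : K))) = monomial (∑ i ∈ s, g i) 1 := by
  induction s using Finset.cons_induction with
  | empty => simp
  | cons a s ha ih => rw [Finset.prod_cons, Finset.sum_cons, ih, monomial_mul, one_mul]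

lemma prod_X_eq_monomial' {K σ ι : Type*} [CommSemiring K] (s : Finset ι) (g : ι → σ) :
    (∏ i ∈ s, (X (g i) : MvPolynomial σ K)) =
      monomial (∑ i ∈ s, Finsupp.single (g i) 1) 1 := by
  rw [← prod_monomial_one']
  exact Finset.prod_congr rfl fun i _ => rfl

lemma sum_range_mul' {M : Type*} [AddCommMonoid M] (F : ℕ → M) (k m : ℕ) :
    ∑ c ∈ Finset.range (k * m), F c
      = ∑ j ∈ Finset.range k, ∑ j' ∈ Finset.range m, F (j * m + j') := by
  induction k with
  | zero => simp
  | succ k ih => rw [Finset.sum_range_succ, ← ih, Nat.succ_mul, Finset.sum_range_add]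

lemma key_sum' {M : Type*} [AddCommMonoid M] (F : ℕ → M) (m t k : ℕ)
    (hm : 1 ≤ m) (hk1 : 1 ≤ k) (hk2 : k ≤ t) :
    (∑ j ∈ Finset.range t, ∑ j' ∈ Finset.range m,
        F ((if j < k then j * m else k * m - 1 + (j - k) * m) + j'))
      = F (k * m - 1) + ∑ c ∈ Finset.range (m * t - 1), F c := by
  obtain ⟨r, rfl⟩ : ∃ r, t = k + r := ⟨t - k, by omega⟩
  have hkm : 1 ≤ k * m := Nat.mul_pos hk1 hm
  rw [Finset.sum_range_add]
  have h1 : ∀ j ∈ Finset.range k,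
      (∑ j' ∈ Finset.range m, F ((if j < k then j * m else k * m - 1 + (j - k) * m) + j'))
        = ∑ j' ∈ Finset.range m, F (j * m + j') := by
    intro j hj
    rw [Finset.mem_range] at hj
    simp [hj]
  have h2 : ∀ j ∈ Finset.range r,
      (∑ j' ∈ Finset.range m,
          F ((if k + j < k then (k + j) * m else k * m - 1 + (k + j - k) * m) + j'))
        = ∑ j' ∈ Finset.range m, F ((k * m - 1) + (j * m + j')) := by
    intro j hj
    have : ¬ (k + j < k) := by omega
    simp only [this, if_false]
    exact Finset.sum_congr rfl fun j' _ => by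
      congr 1
      have : k + j - k = j := by omega
      rw [this]; omega
  rw [Finset.sum_congr rfl h1, Finset.sum_congr rfl h2, ← sum_range_mul', ← sum_range_mul' (fun c => F (k * m - 1 + c))]
  have e1 : m * (k + r) - 1 = (k * m - 1) + r * m := by
    rw [Nat.mul_add, Nat.mul_comm m k, Nat.mul_comm m r]; omega
  rw [e1, Finset.sum_range_add]
  have e2 : k * m = (k * m - 1) + 1 := by omega
  rw [e2, Finset.sum_range_succ]
  simp only [Nat.add_sub_cancel]
  abel

/-- A polynomial-free helper: the vector of exponents of a path monomial. -/
noncomputable def pvec (m t : ℕ) (i : ZMod (m * t)) : ZMod (m * t) →₀ ℕ :=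
  ∑ j ∈ Finset.range m, Finsupp.single (i + (j : ZMod (m * t))) 1

/-- Exponent vector of `x_0 x_1 ⋯ x_{mt-2}`. -/
noncomputable def evec (m t : ℕ) : ZMod (m * t) →₀ ℕ :=
  ∑ c ∈ Finset.range (m * t - 1), Finsupp.single ((c : ZMod (m * t))) 1

/-- The set of "marked" variables: those congruent to `m-1` mod `m`. -/
noncomputable def Bset (m t : ℕ) [NeZero (m * t)] : Finset (ZMod (m * t)) :=
  Finset.univ.filter
    (fun a => ZMod.castHom ⟨t, rfl⟩ (ZMod m) a = ((m - 1 : ℕ) : ZMod m))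

/-- The weight of an exponent vector: total exponent on marked variables. -/
noncomputable def wt (m t : ℕ) [NeZero (m * t)] (s : ZMod (m * t) →₀ ℕ) : ℕ :=
  ∑ a ∈ Bset m t, s a

variable {m t : ℕ}

lemma wt_sum [NeZero (m * t)] {ι : Type*} (s : Finset ι) (g : ι → (ZMod (m * t) →₀ ℕ)) :
    wt m t (∑ j ∈ s, g j) = ∑ j ∈ s, wt m t (g j) := by
  simp only [wt, Finsupp.finset_sum_apply]
  exact Finset.sum_comm

lemma wt_add [NeZero (m * t)] (s s' : ZMod (m * t) →₀ ℕ) :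
    wt m t (s + s') = wt m t s + wt m t s' := by
  simp [wt, Finsupp.add_apply, Finset.sum_add_distrib]

lemma wt_mono [NeZero (m * t)] {s s' : ZMod (m * t) →₀ ℕ} (h : s ≤ s') :
    wt m t s ≤ wt m t s' :=
  Finset.sum_le_sum fun a _ => Finsupp.le_def.mp h a

lemma wt_single [NeZero (m * t)] (a : ZMod (m * t)) :
    wt m t (Finsupp.single a 1) = if a ∈ Bset m t then 1 else 0 := by
  simp [wt, Finsupp.single_apply, Finset.sum_ite_eq]

lemma mem_Bset [NeZero (m * t)] (a : ZMod (m * t)) :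
    a ∈ Bset m t ↔ ZMod.castHom ⟨t, rfl⟩ (ZMod m) a = ((m - 1 : ℕ) : ZMod m) := by
  simp only [Bset, Finset.mem_filter, Finset.mem_univ, true_and]

lemma wt_pvec (hm : 2 ≤ m) [NeZero (m * t)] (i : ZMod (m * t)) :
    wt m t (pvec m t i) = 1 := by
  haveI : NeZero m := ⟨by omega⟩
  rw [pvec, wt_sum]
  set φ := ZMod.castHom (⟨t, rfl⟩ : m ∣ m * t) (ZMod m) with hφ
  set c : ZMod m := ((m - 1 : ℕ) : ZMod m) - φ i with hc
  have step : ∀ j ∈ Finset.range m,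
      wt m t (Finsupp.single (i + (j : ZMod (m * t))) 1)
        = if (j : ZMod m) = c then 1 else 0 := by
    intro j _
    rw [wt_single]
    have : (i + (j : ZMod (m * t))) ∈ Bset m t ↔ (j : ZMod m) = c := by
      rw [mem_Bset, map_add, map_natCast, hc, eq_sub_iff_add_eq']
    simp [this]
  rw [Finset.sum_congr rfl step, Finset.sum_boole]
  have hfil : (Finset.range m).filter (fun j : ℕ => (j : ZMod m) = c) = {ZMod.val c} := by
    ext j
    simp only [Finset.mem_filter, Finset.mem_range, Finset.mem_singleton]
    constructor
    · rintro ⟨hj, h⟩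
      rw [← h, ZMod.val_cast_of_lt hj]
    · rintro rfl
      exact ⟨ZMod.val_lt c, ZMod.natCast_zmod_val c⟩
  rw [hfil]
  simp

lemma wt_evec (hm : 2 ≤ m) (ht : 2 ≤ t) [NeZero (m * t)] :
    wt m t (evec m t) = t - 1 := by
  rw [evec, wt_sum]
  have step : ∀ c ∈ Finset.range (m * t - 1),
      wt m t (Finsupp.single ((c : ZMod (m * t))) 1) = if c % m = m - 1 then 1 else 0 := by
    intro c _
    rw [wt_single]
    have : ((c : ℕ) : ZMod (m * t)) ∈ Bset m t ↔ c % m = m - 1 := by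
      rw [mem_Bset, map_natCast, ZMod.natCast_eq_natCast_iff',
        Nat.mod_eq_of_lt (by omega : m - 1 < m)]
    simp [this]
  rw [Finset.sum_congr rfl step, Finset.sum_boole]
  have himg : (Finset.range (m * t - 1)).filter (fun c => c % m = m - 1)
      = (Finset.range (t - 1)).image (fun j => j * m + (m - 1)) := by
    ext c
    simp only [Finset.mem_filter, Finset.mem_range, Finset.mem_image]
    constructor
    · rintro ⟨hc, hmod⟩
      have hdm := Nat.div_add_mod c m
      obtain ⟨t', rfl⟩ : ∃ t', t = t' + 1 := ⟨t - 1, by omega⟩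
      have e2 : m * (t' + 1 - 1) + m = m * (t' + 1) := by simp [Nat.mul_succ]
      refine ⟨c / m, ?_, ?_⟩
      · have hlt : m * (c / m) < m * (t' + 1 - 1) := by omega
        exact Nat.lt_of_mul_lt_mul_left hlt
      · have hcm : c / m * m = m * (c / m) := Nat.mul_comm _ _
        omega
    · rintro ⟨j, hj, rfl⟩
      obtain ⟨t', rfl⟩ : ∃ t', t = t' + 1 := ⟨t - 1, by omega⟩
      have h1 : (j + 1) * m ≤ (t' + 1 - 1) * m := Nat.mul_le_mul_right m (by omega)
      have e1 : (j + 1) * m = j * m + m := by ring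
      have e2 : (t' + 1 - 1) * m + m = (t' + 1) * m := by simp [Nat.succ_mul]
      have e3 : (t' + 1) * m = m * (t' + 1) := Nat.mul_comm _ _
      constructor
      · omega
      · have : (j * m + (m - 1)) % m = (m - 1) % m := by
          rw [Nat.add_comm]
          exact Nat.add_mul_mod_self_right (m - 1) j m
        rw [this, Nat.mod_eq_of_lt (by omega)]
  rw [himg, Finset.card_image_of_injective _ ?_, Finset.card_range, Nat.cast_id]
  intro a b h
  simp only at h
  have : a * m = b * m := by omega
  exact Nat.eq_of_mul_eq_mul_right (by omega) this

lemma Bset_subset (hm : 2 ≤ m) (ht : 2 ≤ t) [NeZero (m * t)] :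
    ∀ a ∈ Bset m t, ∃ k : ℕ, 1 ≤ k ∧ k ≤ t ∧ a = ((k * m - 1 : ℕ) : ZMod (m * t)) := by
  intro a ha
  rw [mem_Bset] at ha
  have hval : ((a.val : ℕ) : ZMod (m * t)) = a := ZMod.natCast_zmod_val a
  have hφ : ((a.val : ℕ) : ZMod m) = ((m - 1 : ℕ) : ZMod m) := by
    rw [← map_natCast (ZMod.castHom (⟨t, rfl⟩ : m ∣ m * t) (ZMod m)) a.val, hval]
    exact ha
  have hmod : a.val % m = m - 1 := by
    rw [ZMod.natCast_eq_natCast_iff', Nat.mod_eq_of_lt (by omega : m - 1 < m)] at hφ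
    exact hφ
  have hlt : a.val < m * t := ZMod.val_lt a
  have hdm := Nat.div_add_mod a.val m
  refine ⟨a.val / m + 1, Nat.le_add_left 1 _, ?_, ?_⟩
  · have h2 : a.val < t * m := by rw [Nat.mul_comm t m]; exact hlt
    have : a.val / m < t := (Nat.div_lt_iff_lt_mul (by omega)).mpr h2
    omega
  · have e1 : (a.val / m + 1) * m = a.val / m * m + m := by ring
    have hcm : a.val / m * m = m * (a.val / m) := Nat.mul_comm _ _
    have : (a.val / m + 1) * m - 1 = a.val := by omega
    rw [this, hval]

end Aux

/-- The `m`-path ideal of the cycle graph of length `n`, as an ideal of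
`S = K[x_0, …, x_{n-1}]` (variables indexed by `ZMod n`): it is generated by the
`n` monomials `x_i x_{i+1} ⋯ x_{i+m-1}`, indices taken modulo `n`. -/
noncomputable def cyclePathIdeal (K : Type*) [Field K] (n m : ℕ) :
    Ideal (MvPolynomial (ZMod n) K) :=
  Ideal.span { p | ∃ i : ZMod n, p = ∏ j ∈ Finset.range m, X (i + (j : ZMod n)) }

/-- The maximal graded ideal `(x_0, …, x_{n-1})` of `K[x_i : i ∈ σ]`. -/
noncomputable def maxIdeal (K : Type*) [Field K] (σ : Type*) :
    Ideal (MvPolynomial σ K) :=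
  Ideal.span (Set.range (X : σ → MvPolynomial σ K))

/-- For `m, t ≥ 2` and `n = mt`, the colon ideal `(J_{n,m}^t : x_1 x_2 ⋯ x_{mt-1})`
equals `(x_m, x_{2m}, …, x_{mt})`. -/
theorem colon_eq_of_n_eq_mt
    (K : Type*) [Field K] (n m t : ℕ) (hm : 2 ≤ m) (ht : 2 ≤ t) (hn : n = m * t) :
    ((cyclePathIdeal K n m) ^ t).colon
        (Ideal.span {(∏ k ∈ Finset.range (m * t - 1), X ((k : ℕ) : ZMod n) :
          MvPolynomial (ZMod n) K)}) =
      Ideal.span { p : MvPolynomial (ZMod n) K |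
        ∃ k : ℕ, 1 ≤ k ∧ k ≤ t ∧ p = X ((k * m - 1 : ℕ) : ZMod n) } := by
  subst hn
  haveI : NeZero (m * t) := ⟨by positivity⟩
  -- basic monomial descriptions
  have hgen : ∀ i : ZMod (m * t),
      (∏ j ∈ Finset.range m, (X (i + (j : ZMod (m * t))) : MvPolynomial (ZMod (m * t)) K))
        = monomial (pvec m t i) 1 := fun i => prod_X_eq_monomial' _ _
  have hu : (∏ k ∈ Finset.range (m * t - 1),
        (X (((k : ℕ) : ZMod (m * t))) : MvPolynomial (ZMod (m * t)) K))
      = monomial (evec m t) 1 := prod_X_eq_monomial' _ _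
  have hJ : cyclePathIdeal K (m * t) m
      = Ideal.span (Set.range (fun i => monomial (pvec m t i) (1 : K))) := by
    unfold cyclePathIdeal
    congr 1
    ext p
    simp only [Set.mem_setOf_eq, Set.mem_range]
    constructor
    · rintro ⟨i, rfl⟩; exact ⟨i, (hgen i).symm⟩
    · rintro ⟨i, rfl⟩; exact ⟨i, (hgen i).symm⟩
  have hXA : { p : MvPolynomial (ZMod (m * t)) K |
        ∃ k : ℕ, 1 ≤ k ∧ k ≤ t ∧ p = X ((k * m - 1 : ℕ) : ZMod (m * t)) }
      = X '' {a : ZMod (m * t) | ∃ k : ℕ, 1 ≤ k ∧ k ≤ t ∧ a = ((k * m - 1 : ℕ) : ZMod (m * t))} := by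
    ext p
    constructor
    · rintro ⟨k, h1, h2, rfl⟩; exact ⟨_, ⟨k, h1, h2, rfl⟩, rfl⟩
    · rintro ⟨a, ⟨k, h1, h2, rfl⟩, rfl⟩; exact ⟨k, h1, h2, rfl⟩
  -- J^t is contained in the monomial ideal of sums of t path vectors
  have hJt : (cyclePathIdeal K (m * t) m) ^ t
      ≤ Ideal.span ((fun s => monomial s (1 : K)) ''
          { s | ∃ v : Fin t → ZMod (m * t), s = ∑ j, pvec m t (v j) }) := by
    rw [hJ]
    refine le_trans (le_of_eq (Submodule.span_pow _ t)) (Ideal.span_mono ?_)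
    intro x hx
    rw [Set.mem_pow] at hx
    obtain ⟨f, rfl⟩ := hx
    have : ∀ j : Fin t, ∃ i, monomial (pvec m t i) (1 : K) = (f j : MvPolynomial (ZMod (m * t)) K) :=
      fun j => (f j).2
    choose v hv using this
    refine ⟨∑ j, pvec m t (v j), ⟨v, rfl⟩, ?_⟩
    rw [List.prod_ofFn]
    rw [show (∏ j, ((f j : MvPolynomial (ZMod (m * t)) K)))
        = ∏ j, monomial (pvec m t (v j)) (1 : K) from
      Finset.prod_congr rfl fun j _ => (hv j).symm]
    rw [prod_monomial_one']
  apply le_antisymm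
  · -- hard direction
    intro f hf
    rw [Ideal.mem_colon_span_singleton, hu] at hf
    have hf' := hJt hf
    rw [mem_ideal_span_monomial_image] at hf'
    rw [hXA, mem_ideal_span_X_image]
    intro d hd
    by_contra hcon
    push_neg at hcon
    have hsup : d + evec m t ∈ (f * monomial (evec m t) (1 : K)).support := by
      rw [mem_support_iff, coeff_mul_monomial, mul_one]
      exact mem_support_iff.mp hd
    obtain ⟨s, hsT, hle⟩ := hf' _ hsup
    obtain ⟨v, rfl⟩ := hsT
    have h1 : wt m t (∑ j, pvec m t (v j)) = t := by
      rw [wt_sum]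
      simp [wt_pvec hm]
    have h2 : wt m t (d + evec m t) = t - 1 := by
      have hWd : wt m t d = 0 := Finset.sum_eq_zero fun a ha => by
        obtain ⟨k, hk1, hk2, rfl⟩ := Bset_subset hm ht a ha
        exact hcon _ ⟨k, hk1, hk2, rfl⟩
      rw [wt_add, hWd, wt_evec hm ht, zero_add]
    have hmono := wt_mono hle
    omega
  · -- easy direction
    rw [hXA, Ideal.span_le]
    rintro p ⟨a, ⟨k, hk1, hk2, rfl⟩, rfl⟩
    rw [SetLike.mem_coe, Ideal.mem_colon_span_singleton, hu]
    have hkey : (Finsupp.single (((k * m - 1 : ℕ)) : ZMod (m * t)) 1) + evec m t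
        = ∑ j ∈ Finset.range t,
            pvec m t (((if j < k then j * m else k * m - 1 + (j - k) * m : ℕ)) : ZMod (m * t)) := by
      have he : ∀ c : ℕ, pvec m t ((c : ℕ) : ZMod (m * t))
          = ∑ j' ∈ Finset.range m, Finsupp.single (((c + j' : ℕ)) : ZMod (m * t)) 1 := by
        intro c
        rw [pvec]
        exact Finset.sum_congr rfl fun j' _ => by rw [Nat.cast_add]
      rw [Finset.sum_congr rfl fun j _ => he _]
      rw [key_sum' (fun c => Finsupp.single ((c : ZMod (m * t))) 1) m t k (by omega) hk1 hk2]
      rw [evec]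
    have hXu : (X (((k * m - 1 : ℕ)) : ZMod (m * t)) : MvPolynomial (ZMod (m * t)) K)
          * monomial (evec m t) 1
        = ∏ j ∈ Finset.range t,
            monomial (pvec m t
              (((if j < k then j * m else k * m - 1 + (j - k) * m : ℕ)) : ZMod (m * t))) 1 := by
      rw [prod_monomial_one', ← hkey]
      rw [show (X (((k * m - 1 : ℕ)) : ZMod (m * t)) : MvPolynomial (ZMod (m * t)) K)
          = monomial (Finsupp.single (((k * m - 1 : ℕ)) : ZMod (m * t)) 1) 1 from rfl]
      rw [monomial_mul, one_mul]
    rw [hXu]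
    have hmem : ∀ j ∈ Finset.range t,
        (monomial (pvec m t
            (((if j < k then j * m else k * m - 1 + (j - k) * m : ℕ)) : ZMod (m * t))) 1 :
          MvPolynomial (ZMod (m * t)) K) ∈ cyclePathIdeal K (m * t) m := by
      intro j _
      exact Ideal.subset_span ⟨_, (hgen _).symm⟩
    have hprod := Ideal.prod_mem_prod hmem
    simpa [Finset.prod_const, Finset.card_range] using hprod
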